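/- For every integer n ≥ 2, with a_n = ⌊log n / log 2⌋, b_n = ⌊log n / log 2⌋ + 2{n/2}, and c_n = d_n = ⌊n/2⌋ − ⌊log n / log 2⌋, one has the bound |log((1 − 2^{−a_n})^{d_n} (1 − 2^{−b_n})^{c_n})| < 2. -/

import Mathlib

/-- `a_n = ⌊log n / log 2⌋` (integer part; `log` is the natural logarithm). -/
noncomputable def aSeq (n : ℕ) : ℕ := ⌊Real.log n / Real.log 2⌋₊

/-- `b_n = ⌊log n / log 2⌋ + 2{n/2}`, where `2{n/2}` is `0` if `n` is even and `1` if odd. -/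
noncomputable def bSeq (n : ℕ) : ℕ := aSeq n + n % 2

/-- `c_n = d_n = ⌊n/2⌋ − ⌊log n / log 2⌋`. -/
noncomputable def cSeq (n : ℕ) : ℕ := n / 2 - aSeq n

/-- The multinomial coefficient `C(n; a_n, b_n, c_n, d_n) = n!/(a_n! b_n! c_n! d_n!)`
(the subtraction `c_n = ⌊n/2⌋ − a_n` is exact and `a_n + b_n + c_n + d_n = n`). -/
noncomputable def multinomialSeq (n : ℕ) : ℝ :=
  (n.factorial : ℝ) /
    ((aSeq n).factorial * (bSeq n).factorial * (cSeq n).factorial * (cSeq n).factorial)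

/-- The singled-out term
`t_n = C(n; a_n,b_n,c_n,d_n) (1/2)^{a_n+c_n} (1/2)^{b_n+d_n} (1/2)^{a_n b_n}
       (1 − 2^{−a_n})^{d_n} (1 − 2^{−b_n})^{c_n}` with `d_n = c_n`. -/
noncomputable def tSeq (n : ℕ) : ℝ :=
  multinomialSeq n *
    ((1 / 2 : ℝ) ^ (aSeq n + cSeq n) * (1 / 2 : ℝ) ^ (bSeq n + cSeq n) *
      (1 / 2 : ℝ) ^ (aSeq n * bSeq n) *
      (1 - (2 : ℝ) ^ (-(aSeq n : ℤ))) ^ cSeq n *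
      (1 - (2 : ℝ) ^ (-(bSeq n : ℤ))) ^ cSeq n)

/-- For every `n ≥ 2`,
`|log((1 − 2^{−a_n})^{d_n} (1 − 2^{−b_n})^{c_n})| < 2` (with `d_n = c_n`). -/
theorem abs_log_correction_lt_two (n : ℕ) (hn : 2 ≤ n) :
    |Real.log ((1 - (2 : ℝ) ^ (-(aSeq n : ℤ))) ^ cSeq n *
        (1 - (2 : ℝ) ^ (-(bSeq n : ℤ))) ^ cSeq n)| < 2 := by
  have haL : aSeq n = Nat.log 2 n := by
    unfold aSeq
    have h1 : Real.log n / Real.log 2 = Real.logb 2 (n : ℝ) := rfl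
    have h2 : Real.logb 2 (n:ℝ) = Real.logb ((2:ℕ):ℝ) (n:ℝ) := by norm_num
    rw [h1, h2, ← Int.floor_toNat, Real.floor_logb_natCast (Nat.cast_nonneg n),
      Int.log_natCast, Int.toNat_natCast]
  set a := aSeq n with ha
  set b := bSeq n with hb
  set c := cSeq n with hc
  have ha1 : 1 ≤ a := by
    rw [haL]; exact Nat.le_log_of_pow_le one_lt_two (by simpa using hn)
  have hnlt : n < 2 * 2 ^ a := by
    rw [haL, ← pow_succ']; exact Nat.lt_pow_succ_log_self one_lt_two n
  have hapow : a < 2 ^ a := Nat.lt_two_pow_self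
  have hcb : c + a + 1 ≤ 2 ^ a := by
    have : c = n / 2 - a := rfl
    omega
  -- real quantities
  set A : ℝ := (2 : ℝ) ^ a with hA
  have hA2 : (2 : ℝ) ≤ A := by
    calc (2:ℝ) = 2 ^ 1 := (pow_one 2).symm
    _ ≤ A := pow_le_pow_right₀ one_le_two ha1
  have hA1 : (1 : ℝ) < A := lt_of_lt_of_le one_lt_two hA2
  have hx : (2 : ℝ) ^ (-(a : ℤ)) = A⁻¹ := by
    rw [zpow_neg, zpow_natCast]
  have hab : a ≤ b := Nat.le_add_right _ _
  have hxy : (2 : ℝ) ^ (-(b : ℤ)) ≤ (2 : ℝ) ^ (-(a : ℤ)) := by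
    apply zpow_le_zpow_right₀ one_le_two
    omega
  have hy0 : (0 : ℝ) < (2 : ℝ) ^ (-(b : ℤ)) := zpow_pos two_pos _
  have hx1 : (2 : ℝ) ^ (-(a : ℤ)) < 1 := by
    rw [hx]; exact inv_lt_one_of_one_lt₀ hA1
  have h1x : (0:ℝ) < 1 - (2 : ℝ) ^ (-(a : ℤ)) := by linarith
  have h1y : (0:ℝ) < 1 - (2 : ℝ) ^ (-(b : ℤ)) := by linarith
  -- log bound: -log(1-x) ≤ 1/(A-1)
  have hlogx : -Real.log (1 - (2 : ℝ) ^ (-(a : ℤ))) ≤ 1 / (A - 1) := by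
    rw [← Real.log_inv]
    have := Real.log_le_sub_one_of_pos (x := (1 - (2 : ℝ) ^ (-(a : ℤ)))⁻¹) (by positivity)
    refine this.trans ?_
    rw [hx]
    have hA0 : (0:ℝ) < A := by linarith
    rw [hx] at h1x
    have hne : A - 1 ≠ 0 := by linarith
    have hAne : A ≠ 0 := by linarith
    have heq : (1 - A⁻¹)⁻¹ - 1 = 1/(A-1) := by
      rw [show (1:ℝ) - A⁻¹ = (A-1)/A by field_simp, inv_div]
      field_simp
      ring
    exact heq.le
  have hlogy : -Real.log (1 - (2 : ℝ) ^ (-(b : ℤ))) ≤ -Real.log (1 - (2 : ℝ) ^ (-(a : ℤ))) := by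
    have := Real.log_le_log h1x (by linarith : 1 - (2 : ℝ) ^ (-(a : ℤ)) ≤ 1 - (2 : ℝ) ^ (-(b : ℤ)))
    linarith
  have hlogx0 : Real.log (1 - (2 : ℝ) ^ (-(a : ℤ))) ≤ 0 :=
    Real.log_nonpos (by linarith) (by linarith)
  have hlogy0 : Real.log (1 - (2 : ℝ) ^ (-(b : ℤ))) ≤ 0 :=
    Real.log_nonpos (by linarith) (by linarith)
  have hprod : Real.log ((1 - (2 : ℝ) ^ (-(a : ℤ))) ^ c * (1 - (2 : ℝ) ^ (-(b : ℤ))) ^ c)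
      = c * Real.log (1 - (2 : ℝ) ^ (-(a : ℤ))) + c * Real.log (1 - (2 : ℝ) ^ (-(b : ℤ))) := by
    rw [Real.log_mul (by positivity) (by positivity), Real.log_pow, Real.log_pow]
  rw [hprod, abs_of_nonpos (by nlinarith [Nat.cast_nonneg (α := ℝ) c])]
  -- now: -(c*logx + c*logy) < 2
  have hcA : (c : ℝ) + a + 1 ≤ A := by
    have := hcb
    calc (c:ℝ) + a + 1 ≤ ((2^a : ℕ) : ℝ) := by exact_mod_cast this
    _ = A := by push_cast; rfl
  have hca : (1:ℝ) ≤ a := by exact_mod_cast ha1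
  have hkey : (c : ℝ) * (1 / (A - 1)) < 1 := by
    rw [mul_one_div, div_lt_one (by linarith)]
    linarith
  have hc0 : (0:ℝ) ≤ c := Nat.cast_nonneg c
  nlinarith [mul_le_mul_of_nonneg_left hlogx hc0, mul_le_mul_of_nonneg_left hlogy hc0]
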